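/- Let e₁,…,e_n : J → ℝ^ν and e₁',…,e_n' : J' → ℝ^ν be two C¹ moving frames for the same family of n-dimensional subspaces T(t) ⊆ ℝ^ν, defined on open intervals J = (a,b) and J' = (a',b') with a < a' < b < b' (so J ∩ J' ≠ ∅). Then there exists a C¹ moving frame e₁'',…,e_n'' : J ∪ J' → ℝ^ν for T(t) on the union J ∪ J'. -/

import Mathlib

open scoped Matrix

attribute [local instance] Matrix.normedAddCommGroup Matrix.normedSpace

lemma glue_sum_smul {V : Type*} [AddCommGroup V] [Module ℝ V] {n : ℕ}
    (v : Fin n → V) (M : Matrix (Fin n) (Fin n) ℝ) (x : Fin n → ℝ) :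
    ∑ i, x i • (∑ j, M j i • v j) = ∑ j, (M.mulVec x) j • v j := by
  simp only [Finset.smul_sum, Matrix.mulVec, dotProduct, Finset.sum_smul, smul_smul]
  rw [Finset.sum_comm]
  exact Finset.sum_congr rfl fun j _ => Finset.sum_congr rfl fun i _ => by rw [mul_comm]

lemma glue_frame_transform {V : Type*} [AddCommGroup V] [Module ℝ V] {n : ℕ}
    (v : Fin n → V) (hv : LinearIndependent ℝ v)
    (M : Matrix (Fin n) (Fin n) ℝ) (hM : IsUnit M) :
    LinearIndependent ℝ (fun i => ∑ j, M j i • v j) ∧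
      Submodule.span ℝ (Set.range fun i => ∑ j, M j i • v j)
        = Submodule.span ℝ (Set.range v) := by
  have hdet : IsUnit M.det := (Matrix.isUnit_iff_isUnit_det M).mp hM
  constructor
  · rw [Fintype.linearIndependent_iff]
    intro x hx
    rw [glue_sum_smul v M x] at hx
    have h0 : M.mulVec x = 0 :=
      funext (Fintype.linearIndependent_iff.mp hv _ hx)
    have hinj := Matrix.mulVec_injective_iff_isUnit.mpr hM
    have : x = 0 := hinj (by rw [h0, Matrix.mulVec_zero])
    exact fun i => congrFun this i
  · apply le_antisymm
    · rw [Submodule.span_le]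
      rintro _ ⟨i, rfl⟩
      exact Submodule.sum_mem _ fun j _ =>
        Submodule.smul_mem _ _ (Submodule.subset_span (Set.mem_range_self j))
    · rw [Submodule.span_le]
      rintro _ ⟨k, rfl⟩
      have : v k = ∑ i, (M⁻¹.mulVec (Pi.single k 1)) i • (∑ j, M j i • v j) := by
        rw [glue_sum_smul, Matrix.mulVec_mulVec, Matrix.mul_nonsing_inv _ hdet,
          Matrix.one_mulVec]
        simp [Pi.single_apply]
      rw [this]
      exact Submodule.sum_mem _ fun i _ =>
        Submodule.smul_mem _ _ (Submodule.subset_span (Set.mem_range_self i))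

lemma glue_contDiffOn_det {n : ℕ} (A : ℝ → Matrix (Fin n) (Fin n) ℝ) (s : Set ℝ)
    (hA : ∀ i j, ContDiffOn ℝ 1 (fun t => A t i j) s) :
    ContDiffOn ℝ 1 (fun t => (A t).det) s := by
  simp only [Matrix.det_apply]
  refine ContDiffOn.sum fun σ _ => ?_
  have : (fun t => Equiv.Perm.sign σ • ∏ i, A t (σ i) i)
      = fun t => ((Equiv.Perm.sign σ : ℤ) : ℝ) * ∏ i, A t (σ i) i := by
    funext t; rw [Units.smul_def, zsmul_eq_mul]
  rw [this]
  exact ContDiffOn.mul contDiffOn_const (contDiffOn_prod fun i _ => hA _ _)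

lemma glue_contDiffOn_adjugate {n : ℕ} (A : ℝ → Matrix (Fin n) (Fin n) ℝ) (s : Set ℝ)
    (hA : ∀ i j, ContDiffOn ℝ 1 (fun t => A t i j) s) (i j : Fin n) :
    ContDiffOn ℝ 1 (fun t => (A t).adjugate i j) s := by
  simp only [Matrix.adjugate_apply]
  apply glue_contDiffOn_det
  intro k l
  simp only [Matrix.updateRow_apply]
  by_cases h : k = j
  · simp only [h, if_pos rfl]; exact contDiffOn_const
  · simp only [if_neg h]; exact hA k l

lemma glue_gram_key {ν n : ℕ} (w : Fin n → EuclideanSpace ℝ (Fin ν))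
    (hw : LinearIndependent ℝ w) (z : Fin n → ℝ)
    (hz : (Matrix.of fun j k => (inner ℝ (w j) (w k) : ℝ)).mulVec z = 0) : z = 0 := by
  have h2 : (inner ℝ (∑ j, z j • w j) (∑ j, z j • w j) : ℝ)
      = ∑ k, z k * ((Matrix.of fun j k => (inner ℝ (w j) (w k) : ℝ)).mulVec z k) := by
    rw [sum_inner]
    refine Finset.sum_congr rfl fun k _ => ?_
    rw [real_inner_smul_left, inner_sum]
    simp only [real_inner_smul_right, Matrix.mulVec, dotProduct, Matrix.of_apply]
    congr 1
    exact Finset.sum_congr rfl fun j _ => by ring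
  rw [hz] at h2
  simp only [Pi.zero_apply, mul_zero, Finset.sum_const_zero] at h2
  have hv : (∑ j, z j • w j) = 0 := inner_self_eq_zero.mp h2
  funext j
  exact Fintype.linearIndependent_iff.mp hw z hv j

lemma glue_gram_isUnit {ν n : ℕ} (w : Fin n → EuclideanSpace ℝ (Fin ν))
    (hw : LinearIndependent ℝ w) :
    IsUnit (Matrix.of fun j k => (inner ℝ (w j) (w k) : ℝ)).det := by
  rw [← Matrix.isUnit_iff_isUnit_det, ← Matrix.mulVec_injective_iff_isUnit]
  intro x y hxy
  have := glue_gram_key w hw (x - y) (by rw [Matrix.mulVec_sub, hxy, sub_self])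
  exact sub_eq_zero.mp this

lemma glue_repr {ν n : ℕ} (w : Fin n → EuclideanSpace ℝ (Fin ν))
    (hw : LinearIndependent ℝ w) (u : EuclideanSpace ℝ (Fin ν))
    (hu : u ∈ Submodule.span ℝ (Set.range w)) :
    ∑ j, ((Matrix.of fun j k => (inner ℝ (w j) (w k) : ℝ))⁻¹.mulVec
      (fun k => (inner ℝ (w k) u : ℝ))) j • w j = u := by
  obtain ⟨q, hq⟩ := (Submodule.mem_span_range_iff_exists_fun ℝ).mp hu
  have hcol : (fun k => (inner ℝ (w k) u : ℝ))
      = (Matrix.of fun j k => (inner ℝ (w j) (w k) : ℝ)).mulVec q := by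
    funext k
    rw [← hq, inner_sum]
    simp only [real_inner_smul_right, Matrix.mulVec, dotProduct, Matrix.of_apply]
    exact Finset.sum_congr rfl fun j _ => by ring
  rw [hcol, Matrix.mulVec_mulVec,
    Matrix.nonsing_inv_mul _ (glue_gram_isUnit w hw), Matrix.one_mulVec, hq]

/-- Gluing of moving frames: two C¹ moving frames for the same family of
subspaces `T t`, defined on overlapping open intervals `(a,b)` and `(a',b')`
with `a < a' < b < b'`, can be combined into a C¹ moving frame on the union
`(a,b')`. -/
theorem moving_frames_glue {ν n : ℕ} (a b a' b' : ℝ)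
    (h1 : a < a') (h2 : a' < b) (h3 : b < b')
    (T : ℝ → Submodule ℝ (EuclideanSpace ℝ (Fin ν)))
    (e e' : Fin n → ℝ → EuclideanSpace ℝ (Fin ν))
    (he : ∀ i, ContDiffOn ℝ 1 (e i) (Set.Ioo a b))
    (he' : ∀ i, ContDiffOn ℝ 1 (e' i) (Set.Ioo a' b'))
    (hfr : ∀ t ∈ Set.Ioo a b, LinearIndependent ℝ (fun i => e i t) ∧
      Submodule.span ℝ (Set.range fun i => e i t) = T t)
    (hfr' : ∀ t ∈ Set.Ioo a' b', LinearIndependent ℝ (fun i => e' i t) ∧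
      Submodule.span ℝ (Set.range fun i => e' i t) = T t) :
    ∃ e'' : Fin n → ℝ → EuclideanSpace ℝ (Fin ν),
      (∀ i, ContDiffOn ℝ 1 (e'' i) (Set.Ioo a b')) ∧
      ∀ t ∈ Set.Ioo a b', LinearIndependent ℝ (fun i => e'' i t) ∧
        Submodule.span ℝ (Set.range fun i => e'' i t) = T t := by
  classical
  set c : ℝ := (a' + b) / 2 with hcdef
  have hca' : a' < c := by rw [hcdef]; linarith
  have hcb : c < b := by rw [hcdef]; linarith
  have hsub' : Set.Ioo a' b ⊆ Set.Ioo a' b' := Set.Ioo_subset_Ioo le_rfl h3.le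
  have hsub2 : Set.Ioo a' b ⊆ Set.Ioo a b := Set.Ioo_subset_Ioo h1.le le_rfl
  set G : ℝ → Matrix (Fin n) (Fin n) ℝ :=
    fun t => Matrix.of fun j k => (inner ℝ (e' j t) (e' k t) : ℝ) with hGdef
  set P : ℝ → Matrix (Fin n) (Fin n) ℝ :=
    fun t => Matrix.of fun j i =>
      ((G t)⁻¹.mulVec (fun k => (inner ℝ (e' k t) (e i t) : ℝ))) j with hPdef
  -- representation of e in terms of e' on the overlap
  have hrepr : ∀ t ∈ Set.Ioo a' b, ∀ i, (∑ j, P t j i • e' j t) = e i t := by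
    intro t ht i
    have ht1 : t ∈ Set.Ioo a b := hsub2 ht
    have ht2 : t ∈ Set.Ioo a' b' := hsub' ht
    have hu : e i t ∈ Submodule.span ℝ (Set.range fun j => e' j t) := by
      rw [(hfr' t ht2).2, ← (hfr t ht1).2]
      exact Submodule.subset_span (Set.mem_range_self i)
    exact glue_repr (fun j => e' j t) (hfr' t ht2).1 (e i t) hu
  have hGunit : ∀ t ∈ Set.Ioo a' b', IsUnit (G t).det :=
    fun t ht => glue_gram_isUnit (fun j => e' j t) (hfr' t ht).1
  -- smoothness of P on the overlap
  have hGsm : ∀ j k, ContDiffOn ℝ 1 (fun t => G t j k) (Set.Ioo a' b') :=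
    fun j k => ContDiffOn.inner ℝ (he' j) (he' k)
  have hdet : ContDiffOn ℝ 1 (fun t => (G t).det) (Set.Ioo a' b') :=
    glue_contDiffOn_det _ _ hGsm
  have hdetne : ∀ t ∈ Set.Ioo a' b', (G t).det ≠ 0 := fun t ht => (hGunit t ht).ne_zero
  have hinv : ∀ j k, ContDiffOn ℝ 1 (fun t => (G t)⁻¹ j k) (Set.Ioo a' b') := by
    intro j k
    have heq : (fun t => (G t)⁻¹ j k)
        = fun t => ((G t).det)⁻¹ * (G t).adjugate j k := by
      funext t
      rw [Matrix.inv_def, Matrix.smul_apply, Ring.inverse_eq_inv, smul_eq_mul]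
    rw [heq]
    exact (hdet.inv hdetne).mul (glue_contDiffOn_adjugate _ _ hGsm j k)
  have hPsm : ∀ j i, ContDiffOn ℝ 1 (fun t => P t j i) (Set.Ioo a' b) := by
    intro j i
    have heq : (fun t => P t j i)
        = fun t => ∑ k, (G t)⁻¹ j k * (inner ℝ (e' k t) (e i t) : ℝ) := by
      funext t
      simp [hPdef, Matrix.mulVec, dotProduct]
    rw [heq]
    exact ContDiffOn.sum fun k _ =>
      ((hinv j k).mono hsub').mul
        (ContDiffOn.inner ℝ ((he' k).mono hsub') ((he i).mono hsub2))
  have hcI : c ∈ Set.Ioo a' b := ⟨hca', hcb⟩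
  -- P c is invertible
  have hPc_unit : IsUnit (P c) := by
    rw [← Matrix.mulVec_injective_iff_isUnit]
    have key : ∀ z, (P c).mulVec z = 0 → z = 0 := by
      intro z hz
      have hc1 : c ∈ Set.Ioo a b := hsub2 hcI
      have h0 : ∑ i, z i • e i c = 0 := by
        have heq : ∑ i, z i • e i c = ∑ i, z i • (∑ j, P c j i • e' j c) :=
          Finset.sum_congr rfl fun i _ => by rw [hrepr c hcI i]
        rw [heq, glue_sum_smul, hz]
        simp
      funext i
      exact Fintype.linearIndependent_iff.mp (hfr c hc1).1 z h0 i
    intro x y hxy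
    exact sub_eq_zero.mp (key (x - y) (by rw [Matrix.mulVec_sub, hxy, sub_self]))
  -- openness of invertibles around P c
  obtain ⟨ε, hε, hball⟩ : ∃ ε > 0, Metric.ball (P c) ε
      ⊆ {A : Matrix (Fin n) (Fin n) ℝ | A.det ≠ 0} := by
    have hopen : IsOpen {A : Matrix (Fin n) (Fin n) ℝ | A.det ≠ 0} :=
      isOpen_ne.preimage continuous_id.matrix_det
    have hmem : P c ∈ {A : Matrix (Fin n) (Fin n) ℝ | A.det ≠ 0} :=
      ((Matrix.isUnit_iff_isUnit_det _).mp hPc_unit).ne_zero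
    exact Metric.isOpen_iff.mp hopen _ hmem
  -- continuity of P at c, entrywise
  have hPcont : ∀ j k, ContinuousAt (fun t => P t j k) c := fun j k =>
    ((hPsm j k).continuousOn.continuousAt (isOpen_Ioo.mem_nhds hcI))
  have hev : ∀ᶠ t in nhds c, ∀ j k, |P t j k - P c j k| < ε := by
    refine Filter.eventually_all.mpr fun j => Filter.eventually_all.mpr fun k => ?_
    have := Metric.tendsto_nhds.mp (hPcont j k) ε hε
    simpa [Real.dist_eq] using this
  obtain ⟨δ₀, hδ₀, hδ₀p⟩ := Metric.eventually_nhds_iff.mp hev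
  set δ : ℝ := min (δ₀ / 2) (min ((c - a') / 3) ((b - c) / 3)) with hδdef
  have hd0 : δ ≤ δ₀ / 2 := min_le_left _ _
  have hd1 : δ ≤ (c - a') / 3 := le_trans (min_le_right _ _) (min_le_left _ _)
  have hd2 : δ ≤ (b - c) / 3 := le_trans (min_le_right _ _) (min_le_right _ _)
  have hδpos : 0 < δ :=
    lt_min (by linarith) (lt_min (by linarith) (by linarith))
  have hδδ₀ : δ < δ₀ := by linarith
  have h2δa' : a' < c - 2 * δ := by linarith
  have h2δb : c + 2 * δ < b := by linarith
  -- cutoff function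
  set χ : ℝ → ℝ := fun t => Real.smoothTransition ((c + δ - t) / (2 * δ)) with hχdef
  have hχ1 : ∀ t, t ≤ c - δ → χ t = 1 := fun t ht =>
    Real.smoothTransition.one_of_one_le (by rw [le_div_iff₀ (by linarith)]; linarith)
  have hχ0 : ∀ t, c + δ ≤ t → χ t = 0 := fun t ht =>
    Real.smoothTransition.zero_of_nonpos
      (div_nonpos_of_nonpos_of_nonneg (by linarith) (by linarith))
  have hχsm : ContDiff ℝ 1 χ :=
    Real.smoothTransition.contDiff.comp ((contDiff_const.sub contDiff_id).div_const _)
  have hχ01 : ∀ t, |χ t| ≤ 1 := fun t => abs_le.mpr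
    ⟨by linarith [Real.smoothTransition.nonneg ((c + δ - t) / (2 * δ))],
      Real.smoothTransition.le_one _⟩
  set M : ℝ → Matrix (Fin n) (Fin n) ℝ := fun t => P c + χ t • (P t - P c) with hMdef
  have hM1 : ∀ t, χ t = 1 → M t = P t := by
    intro t h; rw [hMdef]; simp only [h, one_smul, add_sub_cancel]
  have hM0 : ∀ t, χ t = 0 → M t = P c := by
    intro t h; rw [hMdef]; simp only [h, zero_smul, add_zero]
  have hMunit : ∀ t, |t - c| < δ₀ → IsUnit (M t) := by
    intro t ht
    rw [Matrix.isUnit_iff_isUnit_det, isUnit_iff_ne_zero]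
    apply hball
    rw [Metric.mem_ball, dist_eq_norm]
    have heq : M t - P c = χ t • (P t - P c) := by rw [hMdef]; simp
    rw [heq, norm_smul]
    calc ‖χ t‖ * ‖P t - P c‖ ≤ 1 * ‖P t - P c‖ := by
          exact mul_le_mul_of_nonneg_right
            (by simpa [Real.norm_eq_abs] using hχ01 t) (norm_nonneg _)
      _ = ‖P t - P c‖ := one_mul _
      _ < ε := by
          rw [Matrix.norm_lt_iff hε]
          intro j k
          have := hδ₀p (show dist t c < δ₀ by rwa [Real.dist_eq]) j k
          simpa [Matrix.sub_apply, Real.norm_eq_abs] using this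
  -- facts about the middle interpolation
  have hFe : ∀ t ∈ Set.Ioo a' b, t ≤ c - δ → ∀ i,
      (∑ j, M t j i • e' j t) = e i t := by
    intro t ht ht' i
    calc (∑ j, M t j i • e' j t) = ∑ j, P t j i • e' j t := by
          rw [hM1 t (hχ1 t ht')]
      _ = e i t := hrepr t ht i
  have hFG : ∀ t, c + δ ≤ t → ∀ i,
      (∑ j, M t j i • e' j t) = ∑ j, P c j i • e' j t := by
    intro t ht i
    rw [hM0 t (hχ0 t ht)]
  -- smoothness of pieces
  have hMsm : ∀ j i, ContDiffOn ℝ 1 (fun t => M t j i) (Set.Ioo a' b) := by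
    intro j i
    have heq : (fun t => M t j i)
        = fun t => P c j i + χ t * (P t j i - P c j i) := by
      funext t
      rw [hMdef]
      simp [Matrix.add_apply, Matrix.smul_apply, Matrix.sub_apply, smul_eq_mul]
    rw [heq]
    exact contDiffOn_const.add
      (hχsm.contDiffOn.mul ((hPsm j i).sub contDiffOn_const))
  have hFsm : ∀ i, ContDiffOn ℝ 1 (fun t => ∑ j, M t j i • e' j t) (Set.Ioo a' b) :=
    fun i => ContDiffOn.sum fun j _ => (hMsm j i).smul ((he' j).mono hsub')
  have hGfsm : ∀ i, ContDiffOn ℝ 1 (fun t => ∑ j, P c j i • e' j t) (Set.Ioo a' b') :=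
    fun i => ContDiffOn.sum fun j _ => (he' j).const_smul (P c j i)
  refine ⟨fun i t => if t < c - δ then e i t
    else if t < c + δ then ∑ j, M t j i • e' j t
    else ∑ j, P c j i • e' j t, ?_, ?_⟩
  · -- smoothness
    intro i
    apply contDiffOn_of_locally_contDiffOn
    intro x hx
    rcases lt_or_ge x (c - δ) with hx1 | hx1
    · refine ⟨Set.Iio (c - δ), isOpen_Iio, hx1, ((he i).mono ?_).congr ?_⟩
      · rintro t ⟨⟨ht1, _⟩, ht3⟩
        exact ⟨ht1, by simp only [Set.mem_Iio] at ht3; linarith⟩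
      · rintro t ⟨_, ht3⟩
        simp only [Set.mem_Iio] at ht3
        simp only [if_pos ht3]
    rcases lt_or_ge x (c + 2 * δ) with hx2 | hx2
    · refine ⟨Set.Ioo (c - 2 * δ) (c + 2 * δ), isOpen_Ioo,
        ⟨by linarith, hx2⟩, ((hFsm i).mono ?_).congr ?_⟩
      · rintro t ⟨_, ht3, ht4⟩
        exact ⟨by linarith, by linarith⟩
      · rintro t ⟨⟨hta, htb⟩, ht3, ht4⟩
        rcases lt_or_ge t (c - δ) with h | h
        · simp only [if_pos h]
          exact (hFe t ⟨by linarith, by linarith⟩ h.le i).symm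
        rcases lt_or_ge t (c + δ) with h' | h'
        · simp only [if_neg (not_lt.mpr h), if_pos h']
        · simp only [if_neg (not_lt.mpr h), if_neg (not_lt.mpr h')]
          exact (hFG t h' i).symm
    · refine ⟨Set.Ioi (c + δ), isOpen_Ioi, by simp only [Set.mem_Ioi]; linarith,
        ((hGfsm i).mono ?_).congr ?_⟩
      · rintro t ⟨⟨_, ht2⟩, ht3⟩
        simp only [Set.mem_Ioi] at ht3
        exact ⟨by linarith, ht2⟩
      · rintro t ⟨_, ht3⟩
        simp only [Set.mem_Ioi] at ht3
        simp only [if_neg (not_lt.mpr (show c - δ ≤ t by linarith)), if_neg (not_lt.mpr ht3.le)]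
  · -- frame property
    intro t ht
    obtain ⟨hta, htb⟩ := ht
    rcases lt_or_ge t (c - δ) with h | h
    · simp only [if_pos h]
      exact hfr t ⟨hta, by linarith⟩
    rcases lt_or_ge t (c + δ) with h' | h'
    · simp only [if_neg (not_lt.mpr h), if_pos h']
      have ht2 : t ∈ Set.Ioo a' b' := ⟨by linarith, by linarith⟩
      have hMt : IsUnit (M t) := hMunit t (abs_lt.mpr ⟨by linarith, by linarith⟩)
      have hh := glue_frame_transform (fun j => e' j t) (hfr' t ht2).1 (M t) hMt
      exact ⟨hh.1, by rw [hh.2, (hfr' t ht2).2]⟩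
    · simp only [if_neg (not_lt.mpr (show c - δ ≤ t by linarith)), if_neg (not_lt.mpr h')]
      have ht2 : t ∈ Set.Ioo a' b' := ⟨by linarith, htb⟩
      have hh := glue_frame_transform (fun j => e' j t) (hfr' t ht2).1 (P c) hPc_unit
      exact ⟨hh.1, by rw [hh.2, (hfr' t ht2).2]⟩
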